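/- arXiv:1906.04620 — 3 statements merged into one kernel-verified Lean document; each statement's English description precedes it below -/
import Mathlib

section
/- Let Γ be a circulant on a finite vertex type V and let b ≥ 1. Then the lexicographic product Γ[Kbar_b] is a circulant. -/
/-- A permutation `e` is an automorphism of the digraph with adjacency `Adj`. -/
def IsDigraphAut {V : Type*} (Adj : V → V → Prop) (e : Equiv.Perm V) : Prop :=
  ∀ x y, Adj x y ↔ Adj (e x) (e y)

/-- The automorphism group of a digraph, as a subgroup of the permutation group. -/
def autGroup {V : Type*} (Adj : V → V → Prop) : Subgroup (Equiv.Perm V) where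
  carrier := {e | IsDigraphAut Adj e}
  one_mem' := by intro x y; exact Iff.rfl
  mul_mem' := by
    intro a b ha hb x y
    exact (hb x y).trans (ha (b x) (b y))
  inv_mem' := by
    intro a ha x y
    simpa using (ha (a⁻¹ x) (a⁻¹ y)).symm

/-- A digraph is arc-transitive if its automorphism group is transitive on arcs. -/
def ArcTransitive {V : Type*} (Adj : V → V → Prop) : Prop :=
  ∀ x y u v, Adj x y → Adj u v → ∃ e ∈ autGroup Adj, e x = u ∧ e y = v

/-- A subgroup of the permutation group of `V` is regular on `V`. -/
def IsRegularSub {V : Type*} (H : Subgroup (Equiv.Perm V)) : Prop :=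
  ∀ u v : V, ∃! h : H, (h : Equiv.Perm V) u = v

/-- A circulant: the automorphism group contains a regular cyclic subgroup. -/
def IsCirculant {V : Type*} (Adj : V → V → Prop) : Prop :=
  ∃ H : Subgroup (Equiv.Perm V), H ≤ autGroup Adj ∧ IsCyclic H ∧ IsRegularSub H

/-- A normal circulant: the automorphism group contains a regular cyclic subgroup
that is normal in the automorphism group. -/
def IsNormalCirculant {V : Type*} (Adj : V → V → Prop) : Prop :=
  ∃ H : Subgroup (Equiv.Perm V), H ≤ autGroup Adj ∧ IsCyclic H ∧ IsRegularSub H ∧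
    ∀ e ∈ autGroup Adj, ∀ h ∈ H, e * h * e⁻¹ ∈ H

/-- Tensor (direct) product of digraphs. -/
def tensorAdj {V₁ V₂ : Type*} (Adj₁ : V₁ → V₁ → Prop) (Adj₂ : V₂ → V₂ → Prop) :
    V₁ × V₂ → V₁ × V₂ → Prop :=
  fun p q => Adj₁ p.1 q.1 ∧ Adj₂ p.2 q.2

/-- Lexicographic product `Γ[Kbar_b]` with the edgeless digraph on `b` vertices. -/
def lexAdj {V : Type*} (Adj : V → V → Prop) (b : ℕ) : V × Fin b → V × Fin b → Prop :=
  fun p q => Adj p.1 q.1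

/-- Digraph isomorphism. -/
def DigraphIso {V₁ V₂ : Type*} (Adj₁ : V₁ → V₁ → Prop) (Adj₂ : V₂ → V₂ → Prop) : Prop :=
  ∃ e : V₁ ≃ V₂, ∀ x y, Adj₁ x y ↔ Adj₂ (e x) (e y)

/-- Connectedness: the reflexive–symmetric–transitive closure of adjacency
relates every pair of vertices. -/
def DigraphConnected {V : Type*} (Adj : V → V → Prop) : Prop :=
  ∀ u v : V, Relation.ReflTransGen (fun a b => Adj a b ∨ Adj b a) u v

/-- R-thick digraph: two distinct vertices with the same in- and out-neighbourhoods. -/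
def RThick {V : Type*} (Adj : V → V → Prop) : Prop :=
  ∃ u v : V, u ≠ v ∧ (∀ w, Adj u w ↔ Adj v w) ∧ (∀ w, Adj w u ↔ Adj w v)

/-- The directed 4-cycle on `ZMod 4`. -/
def C4Adj : ZMod 4 → ZMod 4 → Prop := fun x y => y - x = 1 ∨ y - x = 3

/-- Cayley digraph of a group `G` with connection set `S`. -/
def cayAdj (G : Type*) [Group G] (S : Set G) : G → G → Prop :=
  fun x y => y * x⁻¹ ∈ S

/-- The right-regular representation of `G` inside `Equiv.Perm G`. -/
def rightReg (G : Type*) [Group G] : Subgroup (Equiv.Perm G) where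
  carrier := {e | ∃ g : G, ∀ x, e x = x * g}
  one_mem' := ⟨1, by simp⟩
  mul_mem' := by
    rintro a b ⟨g, hg⟩ ⟨h, hh⟩
    exact ⟨h * g, fun x => by simp [Equiv.Perm.mul_apply, hh, hg, mul_assoc]⟩
  inv_mem' := by
    rintro a ⟨g, hg⟩
    refine ⟨g⁻¹, fun x => a.injective ?_⟩
    rw [Equiv.Perm.inv_def, Equiv.apply_symm_apply, hg]
    simp

/-- Cayley digraph of `ZMod n` with connection set `S`. -/
def zcayAdj (n : ℕ) (S : Set (ZMod n)) : ZMod n → ZMod n → Prop :=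
  fun x y => y - x ∈ S

/-- The translation subgroup of `Equiv.Perm (ZMod n)`. -/
def transSub (n : ℕ) : Subgroup (Equiv.Perm (ZMod n)) where
  carrier := {e | ∃ g : ZMod n, ∀ x, e x = x + g}
  one_mem' := ⟨0, by simp⟩
  mul_mem' := by
    rintro a b ⟨g, hg⟩ ⟨h, hh⟩
    exact ⟨h + g, fun x => by simp [Equiv.Perm.mul_apply, hh, hg, add_assoc]⟩
  inv_mem' := by
    rintro a ⟨g, hg⟩
    refine ⟨-g, fun x => a.injective ?_⟩
    rw [Equiv.Perm.inv_def, Equiv.apply_symm_apply, hg]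
    simp

theorem stmt3 {V : Type*} [Fintype V] [Nonempty V] (Adj : V → V → Prop)
    (hcirc : IsCirculant Adj) (b : ℕ) (hb : 1 ≤ b) :
    IsCirculant (lexAdj Adj b) := by
  classical
  obtain ⟨H, hH, hcyc, hreg⟩ := hcirc
  haveI := hcyc
  obtain ⟨g, hg⟩ := IsCyclic.exists_generator (α := H)
  set n := Fintype.card V with hn
  have v0 : V := Classical.arbitrary V
  -- |H| = n
  have hbij : Function.Bijective (fun h : H => (h : Equiv.Perm V) v0) := by
    constructor
    · intro h₁ h₂ hh
      exact (hreg v0 ((h₁ : Equiv.Perm V) v0)).unique rfl hh.symm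
    · intro v
      exact ⟨(hreg v0 v).exists.choose, (hreg v0 v).exists.choose_spec⟩
  have cardH : Nat.card H = n := by
    rw [Nat.card_eq_of_bijective _ hbij, Nat.card_eq_fintype_card]
  have horder : orderOf g = n := by
    rw [orderOf_eq_card_of_forall_mem_zpowers hg, cardH]
  set gP : Equiv.Perm V := (g : Equiv.Perm V) with hgP
  have hn0 : 0 < n := Fintype.card_pos
  have hN0 : 0 < n * b := Nat.mul_pos hn0 hb
  haveI : NeZero (n * b) := ⟨hN0.ne'⟩
  have hcoe : ∀ k : ℕ, ((g ^ k : H) : Equiv.Perm V) = gP ^ k := by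
    intro k; push_cast [hgP]; rfl
  have hgP1 : gP ^ (n * b) = 1 := by
    have h1 : g ^ n = 1 := by rw [← horder]; exact pow_orderOf_eq_one g
    have : gP ^ n = 1 := by rw [← hcoe, h1]; rfl
    rw [pow_mul, this, one_pow]
  set ψ : ZMod (n * b) → V := fun x => (gP ^ x.val) v0 with hψdef
  have hψ : ∀ x c : ZMod (n * b), ψ (x + c) = (gP ^ c.val) (ψ x) := by
    intro x c
    show (gP ^ (x + c).val) v0 = (gP ^ c.val) ((gP ^ x.val) v0)
    have e1 : (x + c).val = (x.val + c.val) % (n * b) := ZMod.val_add x c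
    rw [e1, ← pow_eq_pow_mod _ hgP1, add_comm x.val, pow_add, Equiv.Perm.mul_apply]
  -- the bijection
  have hdiv : ∀ x : ZMod (n * b), x.val / n < b := fun x =>
    Nat.div_lt_of_lt_mul x.val_lt
  set f : ZMod (n * b) → V × Fin b := fun x => (ψ x, ⟨x.val / n, hdiv x⟩) with hfdef
  have hinj : Function.Injective f := by
    intro x y hxy
    have h1 : ψ x = ψ y := congrArg Prod.fst hxy
    have h2 : x.val / n = y.val / n := congrArg (fun p => (Prod.snd p : Fin b).val) hxy
    have h3 : (g ^ x.val : H) = (g ^ y.val : H) := by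
      apply (hreg v0 (ψ x)).unique
      · rw [hcoe]
      · rw [hcoe]; exact h1.symm
    have h4 : x.val % n = y.val % n := by
      have := pow_eq_pow_iff_modEq.mp h3
      rwa [horder] at this
    have h5 : x.val = y.val := by
      conv_lhs => rw [← Nat.div_add_mod x.val n]
      conv_rhs => rw [← Nat.div_add_mod y.val n]
      rw [h2, h4]
    exact ZMod.val_injective _ h5
  have hcard : Fintype.card (ZMod (n * b)) = Fintype.card (V × Fin b) := by
    simp [ZMod.card, hn]
  set E : ZMod (n * b) ≃ V × Fin b :=
    Equiv.ofBijective f ((Fintype.bijective_iff_injective_and_card f).2 ⟨hinj, hcard⟩) with hEdef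
  have hE1 : ∀ x, (E x).1 = ψ x := fun x => rfl
  -- the transported translation group
  set φ : Multiplicative (ZMod (n * b)) →* Equiv.Perm (V × Fin b) :=
    MonoidHom.mk' (fun c => E.permCongr (Equiv.addRight c.toAdd)) (by
      intro a c
      refine Equiv.ext fun p => ?_
      simp only [Equiv.permCongr_apply, Equiv.Perm.mul_apply, Equiv.coe_addRight,
        Equiv.symm_apply_apply, toAdd_mul]
      congr 1
      ring) with hφdef
  have hφ : ∀ (c : Multiplicative (ZMod (n * b))) (p : V × Fin b),
      φ c p = E (E.symm p + c.toAdd) := by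
    intro c p
    simp [hφdef, Equiv.permCongr_apply]
  refine ⟨φ.range, ?_, ?_, ?_⟩
  · rintro e ⟨c, rfl⟩ p q
    have hmem : gP ^ (c.toAdd.val) ∈ H := by
      exact Subgroup.pow_mem H g.2 _
    have haut := hH hmem
    show Adj p.1 q.1 ↔ Adj (φ c p).1 (φ c q).1
    rw [hφ, hφ, hE1, hE1, hψ, hψ]
    have hp : ψ (E.symm p) = p.1 := by rw [← hE1, E.apply_symm_apply]
    have hq : ψ (E.symm q) = q.1 := by rw [← hE1, E.apply_symm_apply]
    rw [hp, hq]
    exact haut p.1 q.1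
  · exact isCyclic_of_surjective φ.rangeRestrict φ.rangeRestrict_surjective
  · intro u v
    refine ⟨⟨φ (Multiplicative.ofAdd (E.symm v - E.symm u)), ⟨_, rfl⟩⟩, ?_, ?_⟩
    · show φ _ u = v
      rw [hφ]
      simp
    · rintro ⟨h, hhK⟩ hh
      obtain ⟨c, rfl⟩ := hhK
      apply Subtype.ext; show φ c = φ (Multiplicative.ofAdd (E.symm v - E.symm u))
      have : E (E.symm u + c.toAdd) = v := by rw [← hφ]; exact hh
      have hc : c.toAdd = E.symm v - E.symm u := by
        have := congrArg E.symm this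
        rw [E.symm_apply_apply] at this
        rw [← this]; ring
      have hc2 : c = Multiplicative.ofAdd (E.symm v - E.symm u) := by
        rw [← hc]
        rfl
      rw [hc2]
end

section
/- Let n ≥ 1 and let S ⊆ ZMod n generate the additive group ZMod n. Suppose Cay(ZMod n, S) is arc-transitive and the translation subgroup T̂ is normal in Aut(Cay(ZMod n, S)). Then every element s ∈ S generates the additive group ZMod n, and the group Aut(ZMod n, S) of additive automorphisms preserving S acts regularly on S: for all s, t ∈ S there is exactly one additive group automorphism α of ZMod n with α '' S = S and α s = t. -/
/-- Key lemma: arc-transitivity plus normality of translations produces, for any two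
elements of `S`, an additive automorphism preserving `S` and sending one to the other. -/
lemma key_exists (n : ℕ) (S : Set (ZMod n))
    (hat : ArcTransitive (zcayAdj n S))
    (hnorm : ∀ e ∈ autGroup (zcayAdj n S), ∀ h ∈ transSub n, e * h * e⁻¹ ∈ transSub n)
    {s t : ZMod n} (hs : s ∈ S) (ht : t ∈ S) :
    ∃ α : ZMod n ≃+ ZMod n, (⇑α '' S = S) ∧ α s = t := by
  obtain ⟨e, he, he0, hes⟩ := hat 0 s 0 t (by simpa [zcayAdj] using hs)
    (by simpa [zcayAdj] using ht)
  have hinv0 : e⁻¹ 0 = 0 := by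
    conv_lhs => rw [← he0]
    exact Equiv.symm_apply_apply e 0
  have hadd : ∀ x y : ZMod n, e (x + y) = e x + e y := by
    intro x y
    obtain ⟨h, hh⟩ := hnorm e he (Equiv.addRight y) ⟨y, fun x => rfl⟩
    have h0 := hh 0
    simp only [Equiv.Perm.mul_apply, Equiv.coe_addRight, hinv0, zero_add] at h0
    have hx := hh (e x)
    simp only [Equiv.Perm.mul_apply, Equiv.coe_addRight, Equiv.Perm.inv_def, Equiv.symm_apply_apply] at hx
    rw [hx, ← h0]
  have hmemiff : ∀ g, g ∈ S ↔ e g ∈ S := by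
    intro g
    simpa [zcayAdj, he0] using he 0 g
  refine ⟨AddEquiv.mk' (e : ZMod n ≃ ZMod n) hadd, ?_, hes⟩
  ext y
  constructor
  · rintro ⟨x, hx, rfl⟩
    exact (hmemiff x).mp hx
  · intro hy
    exact ⟨e⁻¹ y, (hmemiff _).mpr (by rw [Equiv.Perm.inv_def, Equiv.apply_symm_apply]; exact hy),
      Equiv.apply_symm_apply e y⟩

lemma zmod_addEquiv_apply (n : ℕ) [NeZero n] (α : ZMod n ≃+ ZMod n) (x : ZMod n) :
    α x = x * α 1 := by
  have h1 : (x.val : ZMod n) = x := ZMod.natCast_rightInverse x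
  calc α x = α (x.val • (1 : ZMod n)) := by rw [nsmul_eq_mul, mul_one, h1]
    _ = x.val • α 1 := map_nsmul α x.val 1
    _ = x * α 1 := by rw [nsmul_eq_mul, h1]

theorem stmt8 (n : ℕ) (hn : 1 ≤ n) (S : Set (ZMod n))
    (hgen : AddSubgroup.closure S = ⊤)
    (hat : ArcTransitive (zcayAdj n S))
    (hnorm : ∀ e ∈ autGroup (zcayAdj n S), ∀ h ∈ transSub n, e * h * e⁻¹ ∈ transSub n) :
    (∀ s ∈ S, AddSubgroup.zmultiples s = ⊤) ∧
    (∀ s ∈ S, ∀ t ∈ S, ∃! α : ZMod n ≃+ ZMod n, (⇑α '' S = S) ∧ α s = t) := by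
  haveI : NeZero n := ⟨by omega⟩
  have hgen' : ∀ s ∈ S, AddSubgroup.zmultiples s = ⊤ := by
    intro s hs
    rw [eq_top_iff, ← hgen]
    apply AddSubgroup.closure_le _ |>.mpr
    intro t ht
    obtain ⟨α, hαS, hαs⟩ := key_exists n S hat hnorm hs ht
    refine ⟨(((α 1).val : ℤ)), ?_⟩
    show (((α 1).val : ℤ)) • s = t
    rw [zsmul_eq_mul]
    push_cast
    rw [ZMod.natCast_rightInverse (α 1), mul_comm, ← zmod_addEquiv_apply n α s, hαs]
  refine ⟨hgen', ?_⟩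
  intro s hs t ht
  obtain ⟨α, hαS, hαs⟩ := key_exists n S hat hnorm hs ht
  refine ⟨α, ⟨hαS, hαs⟩, ?_⟩
  rintro β ⟨hβS, hβs⟩
  -- s is a unit since zmultiples s = ⊤
  have hsu : ∃ k : ZMod n, k * s = 1 := by
    have : (1 : ZMod n) ∈ AddSubgroup.zmultiples s := by rw [hgen' s hs]; trivial
    obtain ⟨k, hk⟩ := this
    have hk' : k • s = 1 := hk
    exact ⟨(k : ZMod n), by rw [← hk', zsmul_eq_mul]⟩
  obtain ⟨k, hk⟩ := hsu
  have h1 : α 1 = β 1 := by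
    have hst : s * α 1 = s * β 1 := by
      rw [← zmod_addEquiv_apply n α s, ← zmod_addEquiv_apply n β s, hαs, hβs]
    calc α 1 = k * (s * α 1) := by rw [← mul_assoc, hk, one_mul]
      _ = k * (s * β 1) := by rw [hst]
      _ = β 1 := by rw [← mul_assoc, hk, one_mul]
  ext x
  rw [zmod_addEquiv_apply n α x, zmod_addEquiv_apply n β x, h1]
end

section
/- Let G be a finite group and S ⊆ G with 1 ∉ S, and suppose the Cayley digraph Γ = Cay(G,S) is a normal Cayley digraph (the right-regular representation Ĝ is normal in Aut(Γ)). If Γ is R-thick, then |G| ≤ 4. -/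
theorem stmt13 {G : Type*} [Group G] [Fintype G] (S : Set G) (h1 : (1 : G) ∉ S)
    (hnorm : ∀ e ∈ autGroup (cayAdj G S), ∀ h ∈ rightReg G, e * h * e⁻¹ ∈ rightReg G)
    (hthick : RThick (cayAdj G S)) :
    Fintype.card G ≤ 4 := by
  classical
  by_contra hcard
  push_neg at hcard
  have hcard5 : 5 ≤ Fintype.card G := hcard
  obtain ⟨u, v, huv, hout, hin⟩ := hthick
  set τ : Equiv.Perm G := Equiv.swap u v with hτ
  have hA : ∀ a b, cayAdj G S a b ↔ cayAdj G S (τ a) b := by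
    intro a b
    rcases eq_or_ne a u with rfl | hau
    · simpa [hτ, Equiv.swap_apply_left] using hout b
    rcases eq_or_ne a v with rfl | hav
    · simpa [hτ, Equiv.swap_apply_right] using (hout b).symm
    · rw [hτ, Equiv.swap_apply_of_ne_of_ne hau hav]
  have hB : ∀ a b, cayAdj G S a b ↔ cayAdj G S a (τ b) := by
    intro a b
    rcases eq_or_ne b u with rfl | hbu
    · simpa [hτ, Equiv.swap_apply_left] using hin a
    rcases eq_or_ne b v with rfl | hbv
    · simpa [hτ, Equiv.swap_apply_right] using (hin a).symm
    · rw [hτ, Equiv.swap_apply_of_ne_of_ne hbu hbv]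
  have hτaut : τ ∈ autGroup (cayAdj G S) := by
    intro x y
    exact (hA x y).trans (hB (τ x) y)
  have hτinv : τ⁻¹ = τ := by rw [hτ]; exact Equiv.swap_inv u v
  have hτu : τ u = v := Equiv.swap_apply_left u v
  -- choose g ∉ {1, v⁻¹ * u}
  have hex : ∀ s : Finset G, s.card ≤ 4 → ∃ x : G, x ∉ s := by
    intro s hs
    by_contra hall
    push_neg at hall
    have : Finset.univ ⊆ s := fun x _ => hall x
    have := Finset.card_le_card this
    simp only [Finset.card_univ] at this
    omega
  obtain ⟨g, hg⟩ := hex {1, v⁻¹ * u} (le_trans (Finset.card_insert_le _ _)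
    (by simp))
  simp only [Finset.mem_insert, Finset.mem_singleton] at hg
  push_neg at hg
  obtain ⟨hg1, hg2⟩ := hg
  have hvgv : v * g ≠ v := fun h => hg1 (by
    have := mul_left_cancel (a := v) (by simpa using h); exact this)
  have hvgu : v * g ≠ u := fun h => hg2 (by rw [← h]; group)
  set ρ : Equiv.Perm G := Equiv.mulRight g with hρ
  have hρmem : ρ ∈ rightReg G := ⟨g, fun x => rfl⟩
  obtain ⟨g', hg'⟩ := hnorm τ hτaut ρ hρmem
  have key : ∀ x : G, τ (τ x * g) = x * g' := by
    intro x
    have := hg' x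
    simpa [Equiv.Perm.mul_apply, hτinv, hρ] using this
  -- choose x ∉ {u, v, u * g⁻¹, v * g⁻¹}
  obtain ⟨x, hx⟩ := hex {u, v, u * g⁻¹, v * g⁻¹}
    (le_trans (Finset.card_insert_le _ _) (by
      have := Finset.card_insert_le v ({u * g⁻¹, v * g⁻¹} : Finset G)
      have h2 := Finset.card_insert_le (u * g⁻¹) ({v * g⁻¹} : Finset G)
      simp only [Finset.card_singleton] at h2
      omega))
  simp only [Finset.mem_insert, Finset.mem_singleton] at hx
  push_neg at hx
  obtain ⟨hxu, hxv, hxug, hxvg⟩ := hx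
  have hτx : τ x = x := by rw [hτ]; exact Equiv.swap_apply_of_ne_of_ne hxu hxv
  have hxgu : x * g ≠ u := fun h => hxug (by rw [← h]; group)
  have hxgv : x * g ≠ v := fun h => hxvg (by rw [← h]; group)
  have hτxg : τ (x * g) = x * g := by
    rw [hτ]; exact Equiv.swap_apply_of_ne_of_ne hxgu hxgv
  have hgg' : g' = g := by
    have := key x
    rw [hτx, hτxg] at this
    exact (mul_left_cancel this.symm)
  have hτvg : τ (v * g) = v * g := by
    rw [hτ]; exact Equiv.swap_apply_of_ne_of_ne hvgu hvgv
  have := key u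
  rw [hτu, hτvg, hgg'] at this
  exact huv (mul_right_cancel this).symm
end
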